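/- With the notation of the linear recursion A_{t+1} - x_{t+1} = (1-α_{t+1})(A_t - x_t) + Δ_{t+1} + ε_{t+1} with A_0 = x_0, if |ε_i| ≤ C/N for all i and β_t/β_i ∈ [0,1] for i ≤ t, then |A_t - x_t - β_t S_t| ≤ Ct/N for all 1 ≤ t ≤ N, where S_t = Σ_{i=1}^t Δ_i/β_i. -/

import Mathlib

theorem exploration_approximation_error
    (N : ℕ) (hN : 0 < N) (C : ℝ) (hC : 0 < C)
    (α Δ ε A x : ℕ → ℝ)
    (hα : ∀ i, α i ∈ Set.Ico (0:ℝ) 1)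
    (β : ℕ → ℝ) (hβ : ∀ t, β t = ∏ i ∈ Finset.Icc 1 t, (1 - α i))
    (h0 : A 0 = x 0)
    (hrec : ∀ t, A (t + 1) - x (t + 1)
      = (1 - α (t + 1)) * (A t - x t) + Δ (t + 1) + ε (t + 1))
    (hε : ∀ i, |ε i| ≤ C / (N:ℝ))
    (hratio : ∀ i t : ℕ, i ≤ t → β t / β i ∈ Set.Icc (0:ℝ) 1)
    (S : ℕ → ℝ) (hS : ∀ t, S t = ∑ i ∈ Finset.Icc 1 t, Δ i / β i) :
    ∀ t : ℕ, 1 ≤ t → t ≤ N →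
      |A t - x t - β t * S t| ≤ C * (t:ℝ) / (N:ℝ) := by
  have hβpos : ∀ t, 0 < β t := by
    intro t
    rw [hβ]
    exact Finset.prod_pos fun i _ => by have := (hα i).2; linarith
  have hβsucc : ∀ t, β (t + 1) = β t * (1 - α (t + 1)) := by
    intro t
    rw [hβ, hβ, Finset.prod_Icc_succ_top (Nat.le_add_left 1 t)]
  have key : ∀ t, A t - x t - β t * S t
      = ∑ i ∈ Finset.Icc 1 t, (β t / β i) * ε i := by
    intro t
    induction t with
    | zero => simp [h0, hS]
    | succ t ih =>
      have hne : ∀ i, β i ≠ 0 := fun i => (hβpos i).ne'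
      rw [hrec t, hS, Finset.sum_Icc_succ_top (Nat.le_add_left 1 t),
        Finset.sum_Icc_succ_top (Nat.le_add_left 1 t), ← hS]
      have hsum : ∀ i ∈ Finset.Icc 1 t,
          (β (t+1) / β i) * ε i = (1 - α (t+1)) * ((β t / β i) * ε i) := by
        intro i _
        rw [hβsucc]
        field_simp
      have hα1 : (1 : ℝ) - α (t+1) ≠ 0 := by
        have := (hα (t+1)).2; intro h; linarith
      rw [Finset.sum_congr rfl hsum, ← Finset.mul_sum, ← ih, hβsucc,
        div_self (mul_ne_zero (hne t) hα1)]
      have hβS : β t * (1 - α (t+1)) * (S t + Δ (t+1) / (β t * (1 - α (t+1))))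
          = β t * (1 - α (t+1)) * S t + Δ (t+1) := by
        rw [mul_add, mul_div_cancel₀ _ (mul_ne_zero (hne t) hα1)]
      rw [hβS]
      ring
  intro t ht htN
  rw [key]
  have hbound : ∀ i ∈ Finset.Icc 1 t, |(β t / β i) * ε i| ≤ C / (N:ℝ) := by
    intro i hi
    have hit : i ≤ t := (Finset.mem_Icc.mp hi).2
    have hr := hratio i t hit
    rw [abs_mul, abs_of_nonneg hr.1]
    calc β t / β i * |ε i| ≤ 1 * (C / N) :=
          mul_le_mul hr.2 (hε i) (abs_nonneg _) zero_le_one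
      _ = C / N := one_mul _
  calc |∑ i ∈ Finset.Icc 1 t, (β t / β i) * ε i|
      ≤ ∑ i ∈ Finset.Icc 1 t, |(β t / β i) * ε i| := Finset.abs_sum_le_sum_abs _ _
    _ ≤ ∑ i ∈ Finset.Icc 1 t, C / (N:ℝ) := Finset.sum_le_sum hbound
    _ = (t:ℝ) * (C / N) := by
        rw [Finset.sum_const, Nat.card_Icc]
        simp [nsmul_eq_mul]
    _ = C * t / N := by ring
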